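/- Let c ∈ (0,1), let m ∈ ℕ with m ≥ 1, let τ̄ ∈ ℕ with τ̄ ≥ 1, and let P be a probability distribution on {0,…,τ̄} with P_0 < 1. Set ρ_c = 1 − (1−c²)/m and ρ_a = ρ_c^{m/(m+τ̄)}, define φ_P(ρ) = ρ − ρ_c − (c²/m)·(Σ_{i=0}^{τ̄} P_i·ρ^{−i} − 1), α_P = 1/(1 − φ_P(ρ_a)/φ_P(ρ_c)), and ρ_P = α_P·ρ_a + (1−α_P)·ρ_c. Then: (i) φ_P(ρ_c) < 0 and φ_P(ρ_a) ≥ 0, so α_P ∈ (0,1]; and (ii) every nonnegative real sequence (V(k))_{k∈ℕ} satisfying V(k+1) ≤ (1 − (1−c²·P_0)/m)·V(k) + Σ_{i=1}^{τ̄} (c²·P_i/m)·V(max(k−i,0)) for all k ∈ ℕ satisfies V(k) ≤ ρ_P^k · V(0) for all k ∈ ℕ. -/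

import Mathlib

open Finset

lemma geomB1 (y : ℝ) (hy0 : 0 ≤ y) (hy1 : y ≤ 1) (m : ℕ) :
    ∑ j ∈ range m, y ^ j ≤ (m : ℝ) := by
  calc ∑ j ∈ range m, y ^ j ≤ ∑ j ∈ range m, (1:ℝ) :=
        Finset.sum_le_sum (fun j _ => pow_le_one₀ hy0 hy1)
    _ = (m : ℝ) := by simp

lemma geomB2 (y : ℝ) (hy0 : 0 ≤ y) (hy1 : y ≤ 1) (m : ℕ) :
    ∀ τ : ℕ, ∑ j ∈ range (m * τ), y ^ j ≤ (m : ℝ) * ∑ q ∈ range τ, y ^ (q * m) := by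
  intro τ
  induction τ with
  | zero => simp
  | succ t ih =>
    have h1 : m * (t + 1) = m * t + m := by ring
    rw [h1, Finset.sum_range_add, Finset.sum_range_succ]
    have h2 : ∑ j ∈ range m, y ^ (m * t + j) ≤ (m:ℝ) * y ^ (t * m) := by
      calc ∑ j ∈ range m, y ^ (m * t + j) ≤ ∑ j ∈ range m, y ^ (t * m) := by
            apply Finset.sum_le_sum; intro j _
            exact pow_le_pow_of_le_one hy0 hy1 (by rw [Nat.mul_comm t m]; omega)
        _ = (m:ℝ) * y ^ (t * m) := by rw [Finset.sum_const, card_range, nsmul_eq_mul]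
    linarith [ih]

lemma geomB3 (y : ℝ) (hy0 : 0 ≤ y) (hy1 : y ≤ 1) (m τ : ℕ) (hm : 1 ≤ m) (hτ : 1 ≤ τ) :
    ∑ q ∈ range τ, y ^ (q * m) + (m : ℝ) * y ^ (m * τ) ≤ ∑ j ∈ range (m + τ), y ^ j := by
  have h1 : m + τ = τ + m := by omega
  rw [h1, Finset.sum_range_add]
  have h2 : ∑ q ∈ range τ, y ^ (q * m) ≤ ∑ j ∈ range τ, y ^ j := by
    apply Finset.sum_le_sum; intro q _
    exact pow_le_pow_of_le_one hy0 hy1 (Nat.le_mul_of_pos_right q (by omega))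
  have h3 : (m:ℝ) * y ^ (m * τ) ≤ ∑ j ∈ range m, y ^ (τ + j) := by
    calc (m:ℝ) * y ^ (m * τ) = ∑ _j ∈ range m, y ^ (m * τ) := by
          rw [Finset.sum_const, card_range, nsmul_eq_mul]
      _ ≤ ∑ j ∈ range m, y ^ (τ + j) := by
          apply Finset.sum_le_sum; intro j hj
          apply pow_le_pow_of_le_one hy0 hy1
          have hj' : j < m := Finset.mem_range.mp hj
          have h4 : τ + (m - 1) ≤ m * τ := by
            have h5 : (m-1) * 1 ≤ (m-1) * τ := Nat.mul_le_mul_left _ hτ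
            have h6 : (1 + (m-1)) * τ = τ + (m-1)*τ := by ring
            have h7 : 1 + (m - 1) = m := by omega
            nlinarith [h5]
          omega
  linarith

lemma keyT (y : ℝ) (hy0 : 0 ≤ y) (hy1 : y ≤ 1) (m τ : ℕ) (hm : 1 ≤ m) (hτ : 1 ≤ τ) :
    (1 - y ^ (m * τ)) + (m : ℝ) * y ^ (m * τ) * (1 - y ^ m) ≤ (m : ℝ) * (1 - y ^ (m + τ)) := by
  have hgs : ∀ n : ℕ, (1 - y) * ∑ j ∈ range n, y ^ j = 1 - y ^ n := by
    intro n; have := geom_sum_mul y n; nlinarith [this]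
  set S1 := ∑ j ∈ range (m + τ), y ^ j with hS1
  set S2 := ∑ j ∈ range (m * τ), y ^ j with hS2
  set S3 := ∑ j ∈ range m, y ^ j with hS3
  set S4 := ∑ q ∈ range τ, y ^ (q * m) with hS4
  have hb1 := geomB1 y hy0 hy1 m
  have hb2 := geomB2 y hy0 hy1 m τ
  have hb3 := geomB3 y hy0 hy1 m τ hm hτ
  have hynn : (0:ℝ) ≤ y ^ (m * τ) := pow_nonneg hy0 _
  have hmnn : (0:ℝ) ≤ (m:ℝ) := Nat.cast_nonneg m
  have hb3' : (m:ℝ) * (S4 + (m:ℝ) * y ^ (m*τ)) ≤ (m:ℝ) * S1 :=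
    mul_le_mul_of_nonneg_left hb3 hmnn
  have hb1' : (m:ℝ) * y ^ (m*τ) * S3 ≤ (m:ℝ) * y ^ (m*τ) * (m:ℝ) :=
    mul_le_mul_of_nonneg_left hb1 (by positivity)
  have hG : 0 ≤ (m:ℝ) * S1 - (m:ℝ) * y ^ (m*τ) * S3 - S2 := by nlinarith [hb2, hb3', hb1']
  have hid : (m:ℝ) * (1 - y^(m+τ)) - (1 - y^(m*τ)) - (m:ℝ) * y^(m*τ) * (1 - y^m)
      = (1 - y) * ((m:ℝ) * S1 - (m:ℝ) * y ^ (m*τ) * S3 - S2) := by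
    rw [← hgs (m+τ), ← hgs (m*τ), ← hgs m]; ring
  nlinarith [mul_nonneg (by linarith : (0:ℝ) ≤ 1 - y) hG]

set_option maxHeartbeats 1000000 in
/-- The deterministic core of Theorem 2 of the paper: with
`φ_P(ρ_c) < 0 ≤ φ_P(ρ_a)` and `α_P ∈ (0,1]`, every nonnegative sequence satisfying
the expected delayed recursion converges linearly with factor
`ρ_P = α_P·ρ_a + (1−α_P)·ρ_c`. -/
theorem stmt_11 (c : ℝ) (hc : c ∈ Set.Ioo (0:ℝ) 1) (m τ : ℕ) (hm : 1 ≤ m) (hτ : 1 ≤ τ)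
    (P : ℕ → ℝ) (hP : ∀ i ≤ τ, 0 ≤ P i)
    (hPsum : ∑ i ∈ Finset.range (τ + 1), P i = 1) (hP0 : P 0 < 1)
    (ρc ρa : ℝ) (hρc : ρc = 1 - (1 - c ^ 2) / (m : ℝ))
    (hρa : ρa = ρc ^ ((m : ℝ) / ((m : ℝ) + (τ : ℝ))))
    (φ : ℝ → ℝ)
    (hφ : ∀ ρ, φ ρ = ρ - ρc -
      (c ^ 2 / (m : ℝ)) * ((∑ i ∈ Finset.range (τ + 1), P i * ρ ^ (-(i : ℝ))) - 1))
    (αP : ℝ) (hαP : αP = 1 / (1 - φ ρa / φ ρc))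
    (ρP : ℝ) (hρP : ρP = αP * ρa + (1 - αP) * ρc) :
    (φ ρc < 0 ∧ 0 ≤ φ ρa ∧ αP ∈ Set.Ioc (0:ℝ) 1) ∧
      ∀ V : ℕ → ℝ, (∀ k, 0 ≤ V k) →
        (∀ k, V (k + 1) ≤ (1 - (1 - c ^ 2 * P 0) / (m : ℝ)) * V k +
          ∑ i ∈ Finset.Icc 1 τ, (c ^ 2 * P i / (m : ℝ)) * V (k - i)) →
        ∀ k, V k ≤ ρP ^ k * V 0 := by
  obtain ⟨hc0, hc1⟩ := hc
  have hm0 : (0:ℝ) < m := by exact_mod_cast Nat.pos_of_ne_zero (by omega)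
  have hm1 : (1:ℝ) ≤ m := by exact_mod_cast hm
  have hc2pos : 0 < c^2 := by positivity
  have hc2lt : c^2 < 1 := by nlinarith
  have hρc0 : 0 < ρc := by
    rw [hρc]
    have h1 : (1-c^2)/(m:ℝ) ≤ 1-c^2 := div_le_self (by linarith) hm1
    linarith
  have hρc1 : ρc < 1 := by
    rw [hρc]
    have h1 : 0 < (1-c^2)/(m:ℝ) := div_pos (by linarith) hm0
    linarith
  have hmτpos : (0:ℝ) < (m:ℝ) + (τ:ℝ) := by positivity
  have hρa0 : 0 < ρa := by rw [hρa]; exact Real.rpow_pos_of_pos hρc0 _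
  have hρa1 : ρa ≤ 1 := by
    rw [hρa]; exact Real.rpow_le_one hρc0.le hρc1.le (by positivity)
  have hdecomp : Finset.range (τ+1) = insert 0 (Finset.Icc 1 τ) := by
    ext a; simp only [Finset.mem_range, Finset.mem_insert, Finset.mem_Icc]; omega
  -- (i.a) φ ρc < 0
  have hφρc : φ ρc < 0 := by
    have hS : 1 < ∑ i ∈ Finset.range (τ+1), P i * ρc ^ (-(i:ℝ)) := by
      rw [← hPsum]
      obtain ⟨j, hj1, hjτ, hjpos⟩ : ∃ j, 1 ≤ j ∧ j ≤ τ ∧ 0 < P j := by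
        by_contra h
        push_neg at h
        have h2 : ∑ i ∈ Finset.range (τ+1), P i ≤ P 0 := by
          rw [hdecomp, Finset.sum_insert (by simp)]
          have h3 : ∑ i ∈ Finset.Icc 1 τ, P i ≤ 0 := by
            apply Finset.sum_nonpos; intro i hi
            simp only [Finset.mem_Icc] at hi
            exact h i hi.1 hi.2
          linarith
        rw [hPsum] at h2; linarith
      apply Finset.sum_lt_sum
      · intro i hi
        have hiτ : i ≤ τ := by simp only [Finset.mem_range] at hi; omega
        have h1 : 1 ≤ ρc ^ (-(i:ℝ)) :=
          Real.one_le_rpow_of_pos_of_le_one_of_nonpos hρc0 hρc1.le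
            (neg_nonpos.mpr (Nat.cast_nonneg i))
        nlinarith [hP i hiτ]
      · refine ⟨j, by simp only [Finset.mem_range]; omega, ?_⟩
        have h1 : 1 < ρc ^ (-(j:ℝ)) := by
          rw [Real.one_lt_rpow_iff_of_pos hρc0]
          right
          constructor
          · exact hρc1
          · have : (1:ℝ) ≤ (j:ℝ) := by exact_mod_cast hj1
            linarith
        nlinarith
    rw [hφ]
    have h2 : 0 < (c^2/(m:ℝ)) *
        ((∑ i ∈ Finset.range (τ+1), P i * ρc ^ (-(i:ℝ))) - 1) := by
      apply mul_pos (by positivity); linarith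
    linarith
  -- (i.b) 0 ≤ φ ρa
  have hφρa : 0 ≤ φ ρa := by
    set y : ℝ := ρc ^ (((m:ℝ) + (τ:ℝ))⁻¹) with hy
    have hy0 : 0 < y := Real.rpow_pos_of_pos hρc0 _
    have hy1 : y ≤ 1 := Real.rpow_le_one hρc0.le hρc1.le (by positivity)
    have hcast : ((m + τ : ℕ) : ℝ) = (m:ℝ) + (τ:ℝ) := by push_cast; ring
    have hyρc : y ^ (m + τ) = ρc := by
      rw [hy, ← Real.rpow_natCast (ρc ^ (((m:ℝ)+(τ:ℝ))⁻¹)) (m+τ),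
        ← Real.rpow_mul hρc0.le, hcast, inv_mul_cancel₀ hmτpos.ne', Real.rpow_one]
    have hyρa : y ^ m = ρa := by
      rw [hρa, hy, ← Real.rpow_natCast (ρc ^ (((m:ℝ)+(τ:ℝ))⁻¹)) m,
        ← Real.rpow_mul hρc0.le]
      congr 1
      field_simp
    have hρaτ : ρa ^ τ = y ^ (m * τ) := by rw [← hyρa, ← pow_mul]
    have hu : (0:ℝ) < y ^ (m*τ) := pow_pos hy0 _
    have hsum : ∑ i ∈ Finset.range (τ+1), P i * ρa ^ (-(i:ℝ)) ≤ (y ^ (m*τ))⁻¹ := by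
      have hb : ∀ i ∈ Finset.range (τ+1),
          P i * ρa ^ (-(i:ℝ)) ≤ P i * ρa ^ (-(τ:ℝ)) := by
        intro i hi
        have hiτ : i ≤ τ := by simp only [Finset.mem_range] at hi; omega
        have h1 : ρa ^ (-(i:ℝ)) ≤ ρa ^ (-(τ:ℝ)) := by
          apply Real.rpow_le_rpow_of_exponent_ge hρa0 hρa1
          have : (i:ℝ) ≤ (τ:ℝ) := by exact_mod_cast hiτ
          linarith
        have h2 : 0 ≤ P i := hP i hiτ
        nlinarith
      calc ∑ i ∈ Finset.range (τ+1), P i * ρa ^ (-(i:ℝ))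
          ≤ ∑ i ∈ Finset.range (τ+1), P i * ρa ^ (-(τ:ℝ)) := Finset.sum_le_sum hb
        _ = ρa ^ (-(τ:ℝ)) := by rw [← Finset.sum_mul, hPsum, one_mul]
        _ = (y ^ (m*τ))⁻¹ := by
            rw [Real.rpow_neg hρa0.le, Real.rpow_natCast, hρaτ]
    have hT := keyT y hy0.le hy1 m τ hm hτ
    have hstep : 0 ≤ ρa - ρc - (c^2/(m:ℝ)) * ((y^(m*τ))⁻¹ - 1) := by
      have hc2m : c^2/(m:ℝ) = 1/(m:ℝ) - 1 + ρc := by rw [hρc]; field_simp; ring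
      rw [hc2m, ← hyρa, ← hyρc]
      have hK : (0:ℝ) < (m:ℝ) * y^(m*τ) := by positivity
      have hE : (y^m - y^(m+τ) - (1/(m:ℝ) - 1 + y^(m+τ)) * ((y^(m*τ))⁻¹ - 1))
          * ((m:ℝ) * y^(m*τ))
          = (m:ℝ)*(1 - y^(m+τ)) - (1 - y^(m*τ)) - (m:ℝ)*y^(m*τ)*(1 - y^m) := by
        field_simp
        ring
      have h0 : 0 * ((m:ℝ) * y^(m*τ)) ≤
          (y^m - y^(m+τ) - (1/(m:ℝ) - 1 + y^(m+τ)) * ((y^(m*τ))⁻¹ - 1))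
            * ((m:ℝ) * y^(m*τ)) := by
        rw [zero_mul, hE]; linarith
      exact le_of_mul_le_mul_right h0 hK
    have hcm : 0 ≤ c^2/(m:ℝ) := by positivity
    rw [hφ]
    have h7 : (c^2/(m:ℝ)) * ((∑ i ∈ Finset.range (τ+1), P i * ρa ^ (-(i:ℝ))) - 1)
        ≤ (c^2/(m:ℝ)) * ((y^(m*τ))⁻¹ - 1) :=
      mul_le_mul_of_nonneg_left (by linarith) hcm
    linarith
  -- (i.c) αP ∈ (0,1]
  have hCA : φ ρc - φ ρa < 0 := by linarith
  have hαval : αP = φ ρc / (φ ρc - φ ρa) := by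
    have h2 : 1 - φ ρa / φ ρc = (φ ρc - φ ρa) / φ ρc := by
      field_simp [hφρc.ne]
    rw [hαP, h2, one_div_div]
  have hα0 : 0 < αP := by rw [hαval]; exact div_pos_of_neg_of_neg hφρc hCA
  have hα1 : αP ≤ 1 := by
    have h1 : 1 - αP = φ ρa / (φ ρa - φ ρc) := by
      have hD : φ ρc - φ ρa ≠ 0 := hCA.ne
      have hD' : φ ρa - φ ρc ≠ 0 := fun h => hD (by linarith)
      rw [hαval]; field_simp; ring
    have h2 : 0 ≤ 1 - αP := by rw [h1]; exact div_nonneg hφρa (by linarith)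
    linarith
  refine ⟨⟨hφρc, hφρa, hα0, hα1⟩, ?_⟩
  -- ρP bounds
  have hρP0 : 0 < ρP := by
    rw [hρP]
    have h1 : 0 < αP * ρa := mul_pos hα0 hρa0
    have h2 : 0 ≤ (1 - αP) * ρc := mul_nonneg (by linarith) hρc0.le
    linarith
  have hρP1 : ρP ≤ 1 := by
    rw [hρP]
    linarith [mul_le_mul_of_nonneg_left hρa1 hα0.le,
      mul_le_mul_of_nonneg_left hρc1.le (by linarith : (0:ℝ) ≤ 1 - αP)]
  -- φ ρP ≥ 0
  have hαsum : αP * φ ρa + (1 - αP) * φ ρc = 0 := by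
    have hD : φ ρc - φ ρa ≠ 0 := hCA.ne
    rw [hαval]; field_simp; ring
  have hφρP : 0 ≤ φ ρP := by
    have hconv : ∀ i : ℕ, ρP ^ (-(i:ℝ)) ≤ αP * ρa ^ (-(i:ℝ)) + (1-αP) * ρc ^ (-(i:ℝ)) := by
      intro i
      have h := (convexOn_zpow (𝕜 := ℝ) (-(i:ℤ))).2 (Set.mem_Ioi.mpr hρa0)
        (Set.mem_Ioi.mpr hρc0) hα0.le (by linarith : (0:ℝ) ≤ 1 - αP) (by ring)
      simp only [smul_eq_mul] at h
      have hz : ∀ x : ℝ, 0 < x → x ^ (-(i:ℝ)) = x ^ (-(i:ℤ)) := by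
        intro x hx
        rw [← Real.rpow_intCast x (-(i:ℤ))]; norm_num
      rw [hz ρP hρP0, hz ρa hρa0, hz ρc hρc0, hρP]
      exact h
    have hsum2 : ∑ i ∈ Finset.range (τ+1), P i * ρP ^ (-(i:ℝ)) ≤
        αP * (∑ i ∈ Finset.range (τ+1), P i * ρa ^ (-(i:ℝ)))
        + (1-αP) * (∑ i ∈ Finset.range (τ+1), P i * ρc ^ (-(i:ℝ))) := by
      rw [Finset.mul_sum, Finset.mul_sum, ← Finset.sum_add_distrib]
      apply Finset.sum_le_sum; intro i hi
      have hiτ : i ≤ τ := by simp only [Finset.mem_range] at hi; omega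
      have hPi := hP i hiτ
      have h := hconv i
      nlinarith
    have hφa := hφ ρa
    have hφc := hφ ρc
    have hφp := hφ ρP
    have hcm : 0 ≤ c^2/(m:ℝ) := by positivity
    have h5 : (c^2/(m:ℝ)) * ((∑ i ∈ Finset.range (τ+1), P i * ρP ^ (-(i:ℝ))) - 1)
        ≤ (c^2/(m:ℝ)) * ((αP * (∑ i ∈ Finset.range (τ+1), P i * ρa ^ (-(i:ℝ)))
          + (1-αP) * (∑ i ∈ Finset.range (τ+1), P i * ρc ^ (-(i:ℝ)))) - 1) :=
      mul_le_mul_of_nonneg_left (by linarith) hcm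
    have h6 : ρP - ρc - (c^2/(m:ℝ)) * ((αP * (∑ i ∈ Finset.range (τ+1), P i * ρa ^ (-(i:ℝ)))
          + (1-αP) * (∑ i ∈ Finset.range (τ+1), P i * ρc ^ (-(i:ℝ)))) - 1)
        = αP * φ ρa + (1-αP) * φ ρc := by
      rw [hφa, hφc, hρP]; ring
    linarith [hφp, h5, h6, hαsum]
  -- part (ii): generic induction
  intro V hV hrec k
  induction k using Nat.strong_induction_on with
  | _ k ih =>
    rcases k with _ | n
    · simp
    · have hreceq := hrec n
      have hφρ' := hφ ρP
      rw [hdecomp, Finset.sum_insert (by simp)] at hφρ'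
      have hkey : (1 - (1 - c^2 * P 0)/(m:ℝ))
          + ∑ i ∈ Finset.Icc 1 τ, (c^2 * P i/(m:ℝ)) * ρP ^ (-(i:ℝ)) ≤ ρP := by
        have hpull : ∑ i ∈ Finset.Icc 1 τ, (c^2 * P i/(m:ℝ)) * ρP ^ (-(i:ℝ))
            = (c^2/(m:ℝ)) * ∑ i ∈ Finset.Icc 1 τ, P i * ρP ^ (-(i:ℝ)) := by
          rw [Finset.mul_sum]; apply Finset.sum_congr rfl; intro i _; ring
        have hP00 : P 0 * ρP ^ (-((0:ℕ):ℝ)) = P 0 := by norm_num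
        have hid : 1 - (1 - c^2 * P 0)/(m:ℝ) = ρc + (c^2/(m:ℝ)) * (P 0 - 1) := by
          rw [hρc]; field_simp; ring
        rw [hpull, hid]
        have h0 : (0:ℝ) ≤ ρP - ρc - (c^2/(m:ℝ)) * (P 0 * ρP ^ (-((0:ℕ):ℝ))
            + ∑ i ∈ Finset.Icc 1 τ, P i * ρP ^ (-(i:ℝ)) - 1) := by
          rw [← hφρ']; exact hφρP
        rw [hP00] at h0
        have hexp : ρc + c ^ 2 / (m:ℝ) * (P 0 - 1)
            + c ^ 2 / (m:ℝ) * ∑ i ∈ Finset.Icc 1 τ, P i * ρP ^ (-(i:ℝ))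
            = ρc + c ^ 2 / (m:ℝ)
              * (P 0 + ∑ i ∈ Finset.Icc 1 τ, P i * ρP ^ (-(i:ℝ)) - 1) := by ring
        rw [hexp]
        ring_nf at h0 ⊢
        linarith [h0]
      have hVn : V n ≤ ρP ^ n * V 0 := ih n (by omega)
      have hann : 0 ≤ 1 - (1 - c^2 * P 0)/(m:ℝ) := by
        have hP0nn : 0 ≤ P 0 := hP 0 (by omega)
        have h1 : (1 - c^2 * P 0)/(m:ℝ) ≤ 1 - c^2 * P 0 := by
          apply div_le_self (by nlinarith) hm1
        nlinarith
      have hterm : ∀ i ∈ Finset.Icc 1 τ, (c^2 * P i/(m:ℝ)) * V (n - i)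
          ≤ (c^2 * P i/(m:ℝ)) * (ρP ^ (-(i:ℝ)) * (ρP ^ n * V 0)) := by
        intro i hi
        simp only [Finset.mem_Icc] at hi
        have hbnn : 0 ≤ c^2 * P i/(m:ℝ) := by
          have := hP i hi.2; positivity
        apply mul_le_mul_of_nonneg_left _ hbnn
        have hVni : V (n - i) ≤ ρP ^ (n - i) * V 0 := ih (n - i) (by omega)
        have hpow : ρP ^ (n - i) ≤ ρP ^ (-(i:ℝ)) * ρP ^ n := by
          have h1 : ρP ^ (n - i) = ρP ^ (((n - i : ℕ)):ℝ) :=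
            (Real.rpow_natCast ρP _).symm
          have h2 : ρP ^ (-(i:ℝ)) * ρP ^ n = ρP ^ ((n:ℝ) - (i:ℝ)) := by
            rw [← Real.rpow_natCast ρP n, ← Real.rpow_add hρP0]; ring_nf
          rw [h1, h2]
          apply Real.rpow_le_rpow_of_exponent_ge hρP0 hρP1
          rcases le_or_gt i n with h | h
          · have : ((n - i : ℕ) : ℝ) = (n:ℝ) - (i:ℝ) := by
              push_cast [Nat.cast_sub h]; ring
            rw [this]
          · have hz : n - i = 0 := by omega
            rw [hz]
            have : (n:ℝ) < (i:ℝ) := by exact_mod_cast h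
            simp; linarith
        calc V (n - i) ≤ ρP ^ (n - i) * V 0 := hVni
          _ ≤ (ρP ^ (-(i:ℝ)) * ρP ^ n) * V 0 :=
              mul_le_mul_of_nonneg_right hpow (hV 0)
          _ = ρP ^ (-(i:ℝ)) * (ρP ^ n * V 0) := by ring
      have hS : ∑ i ∈ Finset.Icc 1 τ, (c^2 * P i/(m:ℝ)) * V (n - i)
          ≤ ∑ i ∈ Finset.Icc 1 τ, (c^2 * P i/(m:ℝ)) * (ρP ^ (-(i:ℝ)) * (ρP ^ n * V 0)) :=
        Finset.sum_le_sum hterm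
      have haV : (1 - (1 - c^2 * P 0)/(m:ℝ)) * V n
          ≤ (1 - (1 - c^2 * P 0)/(m:ℝ)) * (ρP ^ n * V 0) :=
        mul_le_mul_of_nonneg_left hVn hann
      have hfac : (1 - (1 - c^2 * P 0)/(m:ℝ)) * (ρP ^ n * V 0)
          + ∑ i ∈ Finset.Icc 1 τ, (c^2 * P i/(m:ℝ)) * (ρP ^ (-(i:ℝ)) * (ρP ^ n * V 0))
          = ((1 - (1 - c^2 * P 0)/(m:ℝ))
            + ∑ i ∈ Finset.Icc 1 τ, (c^2 * P i/(m:ℝ)) * ρP ^ (-(i:ℝ))) * (ρP ^ n * V 0) := by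
        rw [add_mul, Finset.sum_mul]
        congr 1
        apply Finset.sum_congr rfl; intro i _; ring
      have hV0nn : 0 ≤ ρP ^ n * V 0 := mul_nonneg (pow_nonneg hρP0.le n) (hV 0)
      have hlast : ((1 - (1 - c^2 * P 0)/(m:ℝ))
            + ∑ i ∈ Finset.Icc 1 τ, (c^2 * P i/(m:ℝ)) * ρP ^ (-(i:ℝ))) * (ρP ^ n * V 0)
          ≤ ρP * (ρP ^ n * V 0) := mul_le_mul_of_nonneg_right hkey hV0nn
      have hfin : ρP * (ρP ^ n * V 0) = ρP ^ (n + 1) * V 0 := by ring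
      calc V (n + 1) ≤ (1 - (1 - c^2 * P 0)/(m:ℝ)) * V n
            + ∑ i ∈ Finset.Icc 1 τ, (c^2 * P i/(m:ℝ)) * V (n - i) := hreceq
        _ ≤ (1 - (1 - c^2 * P 0)/(m:ℝ)) * (ρP ^ n * V 0)
            + ∑ i ∈ Finset.Icc 1 τ, (c^2 * P i/(m:ℝ)) * (ρP ^ (-(i:ℝ)) * (ρP ^ n * V 0)) :=
          add_le_add haV hS
        _ = ((1 - (1 - c^2 * P 0)/(m:ℝ))
            + ∑ i ∈ Finset.Icc 1 τ, (c^2 * P i/(m:ℝ)) * ρP ^ (-(i:ℝ))) * (ρP ^ n * V 0) := hfac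
        _ ≤ ρP * (ρP ^ n * V 0) := hlast
        _ = ρP ^ (n + 1) * V 0 := hfin
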